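/- arXiv:1506.01080 — 5 statements merged into one kernel-verified Lean document; each statement's English description precedes it below -/
import Mathlib

section
/- Let τ > 0, t_k = k·τ, and suppose the jump times lie on the grid: θᵢ = jᵢ·τ with jᵢ a natural number, i = 1, 2, 3. Define m₁(t) = c₁ + (c₂ + μ₁)t + (c₃ + μ₂)t²/2 + μ₃t³/6 + a₁H(t − θ₁) + a₂(t − θ₂)H(t − θ₂) + (a₃/2)(t − θ₃)²H(t − θ₃), m₂(t) = c₂ + (c₃ + μ₂)t + μ₃t²/2 + a₂H(t − θ₂) + a₃(t − θ₃)H(t − θ₃), m₃(t) = c₃ + μ₃t + a₃H(t − θ₃). Then for every natural number k: m₁(t_{k+1}) = m₁(t_k) + (μ₁ + m₂(t_k))τ + (μ₂ + m₃(t_k))τ²/2 + μ₃τ³/6 + a₁·δ_{k+1,j₁}, m₂(t_{k+1}) = m₂(t_k) + (μ₂ + m₃(t_k))τ + μ₃τ²/2 + a₂·δ_{k+1,j₂}, m₃(t_{k+1}) = m₃(t_k) + μ₃τ + a₃·δ_{k+1,j₃}, where δ_{k+1,jᵢ} is the Kronecker delta (1 if k + 1 = jᵢ, else 0). In the iterative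 form each jump acts only once on its own component. -/
/-- The Heaviside step function: `1` for nonnegative arguments, `0` otherwise. -/
noncomputable def Heaviside (x : ℝ) : ℝ := if 0 ≤ x then 1 else 0

lemma Heaviside_grid (τ : ℝ) (hτ : 0 < τ) (j k : ℕ) :
    Heaviside ((k : ℝ) * τ - (j : ℝ) * τ) = if j ≤ k then 1 else 0 := by
  have h : (0 ≤ (k : ℝ) * τ - (j : ℝ) * τ) ↔ j ≤ k := by
    rw [sub_nonneg, mul_le_mul_iff_of_pos_right hτ, Nat.cast_le]
  simp only [Heaviside, h]

/-- Iterative form of the mean of the three-state clock model with instantaneous jumps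
on a uniform grid `t_k = k·τ`, `θᵢ = jᵢ·τ`: each jump acts only once on its own
component, via the Kronecker delta `δ_{k+1,jᵢ}`. -/
theorem clock_mean_with_jumps_iterative
    (c₁ c₂ c₃ μ₁ μ₂ μ₃ a₁ a₂ a₃ τ : ℝ) (hτ : 0 < τ)
    (j₁ j₂ j₃ : ℕ) (θ₁ θ₂ θ₃ : ℝ)
    (hθ₁ : θ₁ = (j₁ : ℝ) * τ) (hθ₂ : θ₂ = (j₂ : ℝ) * τ) (hθ₃ : θ₃ = (j₃ : ℝ) * τ)
    (m₁ m₂ m₃ : ℝ → ℝ)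
    (hm₁ : ∀ t : ℝ, m₁ t = c₁ + (c₂ + μ₁) * t + (c₃ + μ₂) * t ^ 2 / 2 + μ₃ * t ^ 3 / 6
              + a₁ * Heaviside (t - θ₁) + a₂ * (t - θ₂) * Heaviside (t - θ₂)
              + a₃ / 2 * (t - θ₃) ^ 2 * Heaviside (t - θ₃))
    (hm₂ : ∀ t : ℝ, m₂ t = c₂ + (c₃ + μ₂) * t + μ₃ * t ^ 2 / 2
              + a₂ * Heaviside (t - θ₂) + a₃ * (t - θ₃) * Heaviside (t - θ₃))
    (hm₃ : ∀ t : ℝ, m₃ t = c₃ + μ₃ * t + a₃ * Heaviside (t - θ₃)) :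
    ∀ k : ℕ,
      m₁ (((k : ℝ) + 1) * τ) = m₁ ((k : ℝ) * τ) + (μ₁ + m₂ ((k : ℝ) * τ)) * τ
          + (μ₂ + m₃ ((k : ℝ) * τ)) * τ ^ 2 / 2 + μ₃ * τ ^ 3 / 6
          + a₁ * (if k + 1 = j₁ then 1 else 0) ∧
      m₂ (((k : ℝ) + 1) * τ) = m₂ ((k : ℝ) * τ) + (μ₂ + m₃ ((k : ℝ) * τ)) * τ
          + μ₃ * τ ^ 2 / 2 + a₂ * (if k + 1 = j₂ then 1 else 0) ∧
      m₃ (((k : ℝ) + 1) * τ) = m₃ ((k : ℝ) * τ) + μ₃ * τ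
          + a₃ * (if k + 1 = j₃ then 1 else 0) := by
  intro k
  subst hθ₁ hθ₂ hθ₃
  have key : ∀ j : ℕ, Heaviside (((k : ℝ) + 1) * τ - (j : ℝ) * τ)
      = if j ≤ k + 1 then 1 else 0 := by
    intro j
    have := Heaviside_grid τ hτ j (k + 1)
    push_cast at this
    exact this
  have key' : ∀ j : ℕ, Heaviside ((k : ℝ) * τ - (j : ℝ) * τ)
      = if j ≤ k then 1 else 0 := fun j => Heaviside_grid τ hτ j k
  simp only [hm₁, hm₂, hm₃, key, key']
  have tri : ∀ j : ℕ,
      ((if j ≤ k + 1 then (1:ℝ) else 0) = 1 ∧ (if j ≤ k then (1:ℝ) else 0) = 1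
        ∧ (if k + 1 = j then (1:ℝ) else 0) = 0) ∨
      ((if j ≤ k + 1 then (1:ℝ) else 0) = 1 ∧ (if j ≤ k then (1:ℝ) else 0) = 0
        ∧ (if k + 1 = j then (1:ℝ) else 0) = 1 ∧ (j : ℝ) = (k : ℝ) + 1) ∨
      ((if j ≤ k + 1 then (1:ℝ) else 0) = 0 ∧ (if j ≤ k then (1:ℝ) else 0) = 0
        ∧ (if k + 1 = j then (1:ℝ) else 0) = 0) := by
    intro j
    rcases Nat.lt_trichotomy j (k + 1) with h | h | h
    · exact Or.inl ⟨if_pos (by omega), if_pos (by omega), if_neg (by omega)⟩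
    · refine Or.inr (Or.inl ⟨if_pos (by omega), if_neg (by omega), if_pos (by omega), ?_⟩)
      subst h; push_cast; ring
    · exact Or.inr (Or.inr ⟨if_neg (by omega), if_neg (by omega), if_neg (by omega)⟩)
  refine ⟨?_, ?_, ?_⟩
  · rcases tri j₁ with ⟨e1,e2,e3⟩|⟨e1,e2,e3,e4⟩|⟨e1,e2,e3⟩ <;>
    rcases tri j₂ with ⟨f1,f2,f3⟩|⟨f1,f2,f3,f4⟩|⟨f1,f2,f3⟩ <;>
    rcases tri j₃ with ⟨g1,g2,g3⟩|⟨g1,g2,g3,g4⟩|⟨g1,g2,g3⟩ <;>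
      simp only [e1,e2,e3,f1,f2,f3,g1,g2,g3] <;>
      (try rw [f4]) <;> (try rw [g4]) <;> ring
  · rcases tri j₂ with ⟨f1,f2,f3⟩|⟨f1,f2,f3,f4⟩|⟨f1,f2,f3⟩ <;>
    rcases tri j₃ with ⟨g1,g2,g3⟩|⟨g1,g2,g3,g4⟩|⟨g1,g2,g3⟩ <;>
      simp only [f1,f2,f3,g1,g2,g3] <;> (try rw [g4]) <;> ring
  · rcases tri j₃ with ⟨g1,g2,g3⟩|⟨g1,g2,g3,g4⟩|⟨g1,g2,g3⟩ <;>
      simp only [g1,g2,g3] <;> ring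
end

section
/- Let τ > 0, t_k = k·τ, and suppose θ₀ = j₀·τ and θ₁ = j₁·τ with natural numbers j₀ < j₁; set Δ = θ₁ − θ₀. Define m₁(t) = c₁ + (c₂ + μ₁)t + (c₃ + μ₂)t²/2 + μ₃t³/6 + a·H(t − θ₁) + (a/Δ)(t − θ₀)·(H(t − θ₀) − H(t − θ₁)), m₂(t) = c₂ + (c₃ + μ₂)t + μ₃t²/2 + (a/Δ)(H(t − θ₀) − H(t − θ₁)), m₃(t) = c₃ + μ₃t. Then for every natural number k: m₁(t_{k+1}) = m₁(t_k) + (μ₁ + m₂(t_k))τ + (μ₂ + m₃(t_k))τ²/2 + μ₃τ³/6, m₂(t_{k+1}) = m₂(t_k) + (μ₂ + m₃(t_k))τ + μ₃τ²/2 + (a/Δ)·(δ_{k+1,j₀} − δ_{k+1,j₁}), and m₃(t_{k+1}) = m₃(t_k) + μ₃τ, where δ is the Kronecker delta. The effect of the two opposite jumps is present only in the second component of the iterative form. -/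
set_option maxHeartbeats 2000000 in
/-- Iterative form of the mean of the clock model with two equal and opposite frequency
jumps on a uniform grid `t_k = k·τ`, `θ₀ = j₀·τ`, `θ₁ = j₁·τ`, `Δ = θ₁ − θ₀`: the effect
of the two opposite jumps is present only in the second component. -/
theorem clock_mean_two_opposite_jumps_iterative
    (c₁ c₂ c₃ μ₁ μ₂ μ₃ a τ : ℝ) (hτ : 0 < τ)
    (j₀ j₁ : ℕ) (hj : j₀ < j₁) (θ₀ θ₁ : ℝ)
    (hθ₀ : θ₀ = (j₀ : ℝ) * τ) (hθ₁ : θ₁ = (j₁ : ℝ) * τ)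
    (m₁ m₂ m₃ : ℝ → ℝ)
    (hm₁ : ∀ t : ℝ, m₁ t = c₁ + (c₂ + μ₁) * t + (c₃ + μ₂) * t ^ 2 / 2 + μ₃ * t ^ 3 / 6
              + a * Heaviside (t - θ₁)
              + a / (θ₁ - θ₀) * (t - θ₀) * (Heaviside (t - θ₀) - Heaviside (t - θ₁)))
    (hm₂ : ∀ t : ℝ, m₂ t = c₂ + (c₃ + μ₂) * t + μ₃ * t ^ 2 / 2
              + a / (θ₁ - θ₀) * (Heaviside (t - θ₀) - Heaviside (t - θ₁)))
    (hm₃ : ∀ t : ℝ, m₃ t = c₃ + μ₃ * t) :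
    ∀ k : ℕ,
      m₁ (((k : ℝ) + 1) * τ) = m₁ ((k : ℝ) * τ) + (μ₁ + m₂ ((k : ℝ) * τ)) * τ
          + (μ₂ + m₃ ((k : ℝ) * τ)) * τ ^ 2 / 2 + μ₃ * τ ^ 3 / 6 ∧
      m₂ (((k : ℝ) + 1) * τ) = m₂ ((k : ℝ) * τ) + (μ₂ + m₃ ((k : ℝ) * τ)) * τ
          + μ₃ * τ ^ 2 / 2
          + a / (θ₁ - θ₀) * ((if k + 1 = j₀ then 1 else 0) - (if k + 1 = j₁ then 1 else 0)) ∧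
      m₃ (((k : ℝ) + 1) * τ) = m₃ ((k : ℝ) * τ) + μ₃ * τ := by

  subst hθ₀ hθ₁
  intro k
  have hΔ : (j₁ : ℝ) * τ - (j₀ : ℝ) * τ ≠ 0 := by
    have hjj : (j₀ : ℝ) < (j₁ : ℝ) := by exact_mod_cast hj
    nlinarith
  have heav : ∀ j n : ℕ, Heaviside ((n : ℝ) * τ - (j : ℝ) * τ)
      = if j ≤ n then 1 else 0 := by
    intro j n
    unfold Heaviside
    rcases le_or_gt j n with h | h
    · have h' : (j : ℝ) ≤ n := by exact_mod_cast h
      rw [if_pos h, if_pos (by nlinarith)]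
    · have h' : (n : ℝ) < j := by exact_mod_cast h
      have hne : ¬ (0 : ℝ) ≤ (n : ℝ) * τ - (j : ℝ) * τ := by push_neg; nlinarith
      rw [if_neg hne, if_neg (by omega)]
  have H0k : Heaviside ((k : ℝ) * τ - (j₀ : ℝ) * τ) = if j₀ ≤ k then 1 else 0 := heav j₀ k
  have H1k : Heaviside ((k : ℝ) * τ - (j₁ : ℝ) * τ) = if j₁ ≤ k then 1 else 0 := heav j₁ k
  have H0k1 : Heaviside (((k : ℝ) + 1) * τ - (j₀ : ℝ) * τ) = if j₀ ≤ k + 1 then 1 else 0 := by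
    rw [show ((k : ℝ) + 1) = ((k + 1 : ℕ) : ℝ) by push_cast; ring, heav]
  have H1k1 : Heaviside (((k : ℝ) + 1) * τ - (j₁ : ℝ) * τ) = if j₁ ≤ k + 1 then 1 else 0 := by
    rw [show ((k : ℝ) + 1) = ((k + 1 : ℕ) : ℝ) by push_cast; ring, heav]
  refine ⟨?_, ?_, ?_⟩ <;>
      simp only [hm₁, hm₂, hm₃, H0k, H1k, H0k1, H1k1] <;>
      first
        | ring1
        | (split_ifs <;>
            first
              | (exfalso; omega)
              | (field_simp [hΔ]; ring1)
              | (have h0 : (j₀ : ℝ) = (k : ℝ) + 1 := by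
                    have hh : j₀ = k + 1 := by omega
                    exact_mod_cast hh
                 rw [h0] at hΔ ⊢; field_simp [hΔ]; ring1)
              | (have h1 : (j₁ : ℝ) = (k : ℝ) + 1 := by
                    have hh : j₁ = k + 1 := by omega
                    exact_mod_cast hh
                 rw [h1] at hΔ ⊢
                 have hΔ' : (1 + (k : ℝ) - (j₀ : ℝ)) ≠ 0 := by
                   intro h; apply hΔ; linear_combination τ * h
                 field_simp [hΔ, hΔ']; linear_combination (-12 * a) * mul_inv_cancel₀ hΔ'))
end

section
/- For all real t and τ, the covariance matrix of the three-state clock model satisfies the propagation identity Σ(t + τ) = Φ(τ) · Σ(t) · Φ(τ)ᵀ + Σ(τ), where Φ(τ) is the state transition matrix. In particular, in the iterative solution the innovation covariance over a step of length τ equals Q = Σ(τ). -/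
open Matrix

/-- The covariance matrix `Σ(t)` of the three-state clock model. -/
noncomputable def clockCov (σ₁ σ₂ σ₃ t : ℝ) : Matrix (Fin 3) (Fin 3) ℝ :=
  !![σ₁ ^ 2 * t + σ₂ ^ 2 * t ^ 3 / 3 + σ₃ ^ 2 * t ^ 5 / 20,
       σ₂ ^ 2 * t ^ 2 / 2 + σ₃ ^ 2 * t ^ 4 / 8, σ₃ ^ 2 * t ^ 3 / 6;
     σ₂ ^ 2 * t ^ 2 / 2 + σ₃ ^ 2 * t ^ 4 / 8,
       σ₂ ^ 2 * t + σ₃ ^ 2 * t ^ 3 / 3, σ₃ ^ 2 * t ^ 2 / 2;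
     σ₃ ^ 2 * t ^ 3 / 6, σ₃ ^ 2 * t ^ 2 / 2, σ₃ ^ 2 * t]

/-- The state transition matrix `Φ(τ)` of the three-state clock model. -/
noncomputable def clockPhi (τ : ℝ) : Matrix (Fin 3) (Fin 3) ℝ :=
  !![1, τ, τ ^ 2 / 2;
     0, 1, τ;
     0, 0, 1]

lemma clockPhi_transpose (τ : ℝ) :
    (clockPhi τ)ᵀ = !![1, 0, 0; τ, 1, 0; τ ^ 2 / 2, τ, 1] := by
  ext i j
  fin_cases i <;> fin_cases j <;> simp [clockPhi, Matrix.vecHead, Matrix.vecTail]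

set_option maxHeartbeats 1000000 in
/-- Covariance propagation identity: `Σ(t + τ) = Φ(τ)·Σ(t)·Φ(τ)ᵀ + Σ(τ)`; in particular
the innovation covariance over a step of length `τ` is `Q = Σ(τ)`. -/
theorem clockCov_propagation (σ₁ σ₂ σ₃ t τ : ℝ) :
    clockCov σ₁ σ₂ σ₃ (t + τ)
      = clockPhi τ * clockCov σ₁ σ₂ σ₃ t * (clockPhi τ)ᵀ + clockCov σ₁ σ₂ σ₃ τ := by
  rw [clockPhi_transpose]
  ext i j
  fin_cases i <;> fin_cases j <;>
    simp [clockCov, clockPhi, mul_apply, Fin.sum_univ_three] <;> ring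
end

section
/- For all real σ₁, σ₂, σ₃ and every t ≥ 0, the matrix Σ(t) is positive semidefinite. -/
lemma quad2 (a b t : ℝ) (ht : 0 ≤ t) :
    0 ≤ a ^ 2 * t ^ 3 / 3 + a * b * t ^ 2 + b ^ 2 * t := by
  nlinarith [mul_nonneg ht (sq_nonneg (a * t + 3 / 2 * b)), mul_nonneg ht (sq_nonneg b)]

lemma quad3 (a b c t : ℝ) (ht : 0 ≤ t) :
    0 ≤ a ^ 2 * t ^ 5 / 20 + a * b * t ^ 4 / 4 + (a * c / 3 + b ^ 2 / 3) * t ^ 3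
      + b * c * t ^ 2 + c ^ 2 * t := by
  nlinarith [mul_nonneg ht (sq_nonneg (a * t ^ 2 + 5 / 2 * b * t + 10 / 3 * c)),
    mul_nonneg ht (sq_nonneg (b * t + 2 * c)), mul_nonneg ht (sq_nonneg c)]

/-- For `t ≥ 0` the covariance matrix `Σ(t)` is positive semidefinite. -/
theorem clockCov_posSemidef (σ₁ σ₂ σ₃ t : ℝ) (ht : 0 ≤ t) :
    (clockCov σ₁ σ₂ σ₃ t).PosSemidef := by
  rw [Matrix.posSemidef_iff_dotProduct_mulVec]
  constructor
  · ext i j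
    fin_cases i <;> fin_cases j <;>
      simp [clockCov, Matrix.conjTranspose_apply]
  · intro x
    have h1 : 0 ≤ σ₁ ^ 2 * (x 0 ^ 2 * t) := by positivity
    have h2 := mul_nonneg (sq_nonneg σ₂) (quad2 (x 0) (x 1) t ht)
    have h3 := mul_nonneg (sq_nonneg σ₃) (quad3 (x 0) (x 1) (x 2) t ht)
    simp [clockCov, Matrix.mulVec, dotProduct, Fin.sum_univ_three]
    nlinarith [h1, h2, h3]
end

section
/- For all real σ₁, σ₂ and every real σ₃ ≠ 0 and every t > 0, the matrix Σ(t) is positive definite; hence the Normal distribution of the clock state at any positive time is nondegenerate whenever the frequency-drift noise coefficient σ₃ is nonzero. -/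
/-- If the frequency-drift noise coefficient `σ₃` is nonzero, then for every `t > 0` the
covariance matrix `Σ(t)` is positive definite, i.e. the Normal distribution of the clock
state at any positive time is nondegenerate. -/
theorem clockCov_posDef (σ₁ σ₂ σ₃ t : ℝ) (hσ₃ : σ₃ ≠ 0) (ht : 0 < t) :
    (clockCov σ₁ σ₂ σ₃ t).PosDef := by
  refine ⟨?_, ?_⟩
  · ext i j
    fin_cases i <;> fin_cases j <;>
      simp [clockCov, Matrix.IsHermitian, Matrix.conjTranspose_apply]
  · intro x hx
    have hx3 : x 0 ≠ 0 ∨ x 1 ≠ 0 ∨ x 2 ≠ 0 := by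
      by_contra h
      push_neg at h
      apply hx
      ext i
      fin_cases i <;> simp [h.1, h.2.1, h.2.2]
    set a := x 0
    set b := x 1
    set c := x 2
    have hQ : 0 < t * (c + t * b / 2 + t ^ 2 * a / 6) ^ 2
        + t ^ 3 / 12 * (b + t * a / 2) ^ 2 + t ^ 5 / 720 * a ^ 2 := by
      by_cases ha : a = 0
      · by_cases hb : b = 0
        · have hc : c ≠ 0 := by tauto
          rw [ha, hb]
          have : 0 < c ^ 2 := by positivity
          nlinarith [sq_nonneg c, mul_pos ht this]
        · rw [ha]
          have h1 : 0 < b ^ 2 := by positivity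
          nlinarith [sq_nonneg (c + t * b / 2), mul_pos (by positivity : (0:ℝ) < t ^ 3 / 12) h1,
            mul_nonneg ht.le (sq_nonneg (c + t * b / 2))]
      · have h1 : 0 < a ^ 2 := by positivity
        nlinarith [mul_nonneg ht.le (sq_nonneg (c + t * b / 2 + t ^ 2 * a / 6)),
          mul_nonneg (by positivity : (0:ℝ) ≤ t ^ 3 / 12) (sq_nonneg (b + t * a / 2)),
          mul_pos (by positivity : (0:ℝ) < t ^ 5 / 720) h1]
    have hσ : 0 < σ₃ ^ 2 := by positivity
    simp only [clockCov]
    simp [Finsupp.sum_fintype, Fin.sum_univ_three]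
    nlinarith [mul_pos hσ hQ,
      mul_nonneg (sq_nonneg σ₁) (mul_nonneg ht.le (sq_nonneg a)),
      mul_nonneg (sq_nonneg σ₂)
        (mul_nonneg ht.le (sq_nonneg (b + t * a / 2))),
      mul_nonneg (sq_nonneg σ₂)
        (mul_nonneg (by positivity : (0:ℝ) ≤ t ^ 3 / 12) (sq_nonneg a))]
end
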